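/- The polynomial S(δ) = δ^8 − 2δ^7 + δ^6 − 2δ^5 + δ^4 − 2δ^3 + δ^2 − 2δ + 1 has exactly two real roots, one in the interval (1.993, 1.995) and one in (0.501, 0.502), and all its other roots lie on the unit circle. -/

import Mathlib

/-- The Salem polynomial `S(δ) = δ^8 − 2δ^7 + δ^6 − 2δ^5 + δ^4 − 2δ^3 + δ^2 − 2δ + 1`. -/
noncomputable def salemS (δ : ℂ) : ℂ :=
  δ^8 - 2*δ^7 + δ^6 - 2*δ^5 + δ^4 - 2*δ^3 + δ^2 - 2*δ + 1

private def Pr (t : ℝ) : ℝ := t^4 - 2*t^3 - 3*t^2 + 4*t + 1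

private lemma Pr_cont : Continuous Pr := by
  unfold Pr; continuity

private lemma salem_id (z : ℂ) (hz : z ≠ 0) :
    salemS z = z^4 * ((z + z⁻¹)^4 - 2*(z + z⁻¹)^3 - 3*(z + z⁻¹)^2 + 4*(z + z⁻¹) + 1) := by
  have h : z * z⁻¹ = 1 := mul_inv_cancel₀ hz
  unfold salemS
  linear_combination (-1 + 2*z - z*z⁻¹ - z^2 + 2*z^2*z⁻¹ - z^2*z⁻¹^2 + 2*z^3 - z^3*z⁻¹
    + 2*z^3*z⁻¹^2 - z^3*z⁻¹^3 + 6*z^4*z⁻¹ - 4*z^4*z⁻¹^2 + 6*z^5 - 6*z^5*z⁻¹ - 4*z^6) * h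

private lemma factor (t0 t1 t2 t3 : ℂ)
    (h01 : t1 ≠ t0) (h02 : t2 ≠ t0) (h12 : t2 ≠ t1)
    (h03 : t3 ≠ t0) (h13 : t3 ≠ t1) (h23 : t3 ≠ t2)
    (hP0 : t0^4 - 2*t0^3 - 3*t0^2 + 4*t0 + 1 = 0)
    (hP1 : t1^4 - 2*t1^3 - 3*t1^2 + 4*t1 + 1 = 0)
    (hP2 : t2^4 - 2*t2^3 - 3*t2^2 + 4*t2 + 1 = 0)
    (hP3 : t3^4 - 2*t3^3 - 3*t3^2 + 4*t3 + 1 = 0)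
    (w : ℂ) :
    w^4 - 2*w^3 - 3*w^2 + 4*w + 1 = (w - t0)*(w - t1)*(w - t2)*(w - t3) := by
  have hQ3 : ∀ u : ℂ, u^4 - 2*u^3 - 3*u^2 + 4*u + 1
      = (u - t0) * (u^3 + (t0-2)*u^2 + (t0^2-2*t0-3)*u + (t0^3-2*t0^2-3*t0+4)) := by
    intro u; linear_combination hP0
  have hQ3t1 : t1^3 + (t0-2)*t1^2 + (t0^2-2*t0-3)*t1 + (t0^3-2*t0^2-3*t0+4) = 0 :=
    (mul_eq_zero.mp ((hQ3 t1).symm.trans hP1)).resolve_left (sub_ne_zero.mpr h01)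
  have hQ3t2 : t2^3 + (t0-2)*t2^2 + (t0^2-2*t0-3)*t2 + (t0^3-2*t0^2-3*t0+4) = 0 :=
    (mul_eq_zero.mp ((hQ3 t2).symm.trans hP2)).resolve_left (sub_ne_zero.mpr h02)
  have hQ3t3 : t3^3 + (t0-2)*t3^2 + (t0^2-2*t0-3)*t3 + (t0^3-2*t0^2-3*t0+4) = 0 :=
    (mul_eq_zero.mp ((hQ3 t3).symm.trans hP3)).resolve_left (sub_ne_zero.mpr h03)
  have hQ2 : ∀ u : ℂ, u^3 + (t0-2)*u^2 + (t0^2-2*t0-3)*u + (t0^3-2*t0^2-3*t0+4)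
      = (u - t1) * (u^2 + (t0+t1-2)*u + (t1^2 + t0*t1 - 2*t1 + t0^2 - 2*t0 - 3)) := by
    intro u; linear_combination hQ3t1
  have hQ2t2 : t2^2 + (t0+t1-2)*t2 + (t1^2 + t0*t1 - 2*t1 + t0^2 - 2*t0 - 3) = 0 :=
    (mul_eq_zero.mp ((hQ2 t2).symm.trans hQ3t2)).resolve_left (sub_ne_zero.mpr h12)
  have hQ2t3 : t3^2 + (t0+t1-2)*t3 + (t1^2 + t0*t1 - 2*t1 + t0^2 - 2*t0 - 3) = 0 :=
    (mul_eq_zero.mp ((hQ2 t3).symm.trans hQ3t3)).resolve_left (sub_ne_zero.mpr h13)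
  have hQ1 : ∀ u : ℂ, u^2 + (t0+t1-2)*u + (t1^2 + t0*t1 - 2*t1 + t0^2 - 2*t0 - 3)
      = (u - t2) * (u + (t0+t1+t2-2)) := by
    intro u; linear_combination hQ2t2
  have hQ1t3 : t3 + (t0+t1+t2-2) = 0 :=
    (mul_eq_zero.mp ((hQ1 t3).symm.trans hQ2t3)).resolve_left (sub_ne_zero.mpr h23)
  linear_combination hQ3 w + (w - t0) * hQ2 w + (w - t0)*(w - t1) * hQ1 w
    + (w - t0)*(w - t1)*(w - t2) * hQ1t3

set_option maxHeartbeats 1000000 in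
theorem stmt_2 :
    ∃ x y : ℝ, x ∈ Set.Ioo (1.993 : ℝ) 1.995 ∧ y ∈ Set.Ioo (0.501 : ℝ) 0.502 ∧
      salemS (x : ℂ) = 0 ∧ salemS (y : ℂ) = 0 ∧
      (∀ r : ℝ, salemS (r : ℂ) = 0 → r = x ∨ r = y) ∧
      (∀ z : ℂ, salemS z = 0 → (∀ r : ℝ, z ≠ (r : ℂ)) → ‖z‖ = 1) := by
  -- four real roots of P(t) = t^4 - 2t^3 - 3t^2 + 4t + 1
  obtain ⟨t0, ht0, hP0⟩ : ∃ t ∈ Set.Ioo (2.495:ℝ) 2.496, Pr t = 0 := by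
    have h := intermediate_value_Ioo (by norm_num : (2.495:ℝ) ≤ 2.496) Pr_cont.continuousOn
    have h0 : (0:ℝ) ∈ Set.Ioo (Pr 2.495) (Pr 2.496) := by
      rw [Set.mem_Ioo]; norm_num [Pr]
    obtain ⟨t, ht, hPt⟩ := h h0
    exact ⟨t, ht, hPt⟩
  obtain ⟨t1, ht1, hP1⟩ : ∃ t ∈ Set.Ioo (-2:ℝ) (-1), Pr t = 0 := by
    have h := intermediate_value_Ioo' (by norm_num : (-2:ℝ) ≤ -1) Pr_cont.continuousOn
    have h0 : (0:ℝ) ∈ Set.Ioo (Pr (-1)) (Pr (-2)) := by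
      rw [Set.mem_Ioo]; norm_num [Pr]
    obtain ⟨t, ht, hPt⟩ := h h0
    exact ⟨t, ht, hPt⟩
  obtain ⟨t2, ht2, hP2⟩ : ∃ t ∈ Set.Ioo (-1:ℝ) 0, Pr t = 0 := by
    have h := intermediate_value_Ioo (by norm_num : (-1:ℝ) ≤ 0) Pr_cont.continuousOn
    have h0 : (0:ℝ) ∈ Set.Ioo (Pr (-1)) (Pr 0) := by
      rw [Set.mem_Ioo]; norm_num [Pr]
    obtain ⟨t, ht, hPt⟩ := h h0
    exact ⟨t, ht, hPt⟩
  obtain ⟨t3, ht3, hP3⟩ : ∃ t ∈ Set.Ioo (1:ℝ) 2, Pr t = 0 := by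
    have h := intermediate_value_Ioo' (by norm_num : (1:ℝ) ≤ 2) Pr_cont.continuousOn
    have h0 : (0:ℝ) ∈ Set.Ioo (Pr 2) (Pr 1) := by
      rw [Set.mem_Ioo]; norm_num [Pr]
    obtain ⟨t, ht, hPt⟩ := h h0
    exact ⟨t, ht, hPt⟩
  obtain ⟨ht0a, ht0b⟩ := ht0
  obtain ⟨ht1a, ht1b⟩ := ht1
  obtain ⟨ht2a, ht2b⟩ := ht2
  obtain ⟨ht3a, ht3b⟩ := ht3
  unfold Pr at hP0 hP1 hP2 hP3
  norm_num at ht0a ht0b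
  -- casts
  have hP0c : (t0:ℂ)^4 - 2*(t0:ℂ)^3 - 3*(t0:ℂ)^2 + 4*(t0:ℂ) + 1 = 0 := by exact_mod_cast hP0
  have hP1c : (t1:ℂ)^4 - 2*(t1:ℂ)^3 - 3*(t1:ℂ)^2 + 4*(t1:ℂ) + 1 = 0 := by exact_mod_cast hP1
  have hP2c : (t2:ℂ)^4 - 2*(t2:ℂ)^3 - 3*(t2:ℂ)^2 + 4*(t2:ℂ) + 1 = 0 := by exact_mod_cast hP2
  have hP3c : (t3:ℂ)^4 - 2*(t3:ℂ)^3 - 3*(t3:ℂ)^2 + 4*(t3:ℂ) + 1 = 0 := by exact_mod_cast hP3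
  have h01 : (t1:ℂ) ≠ (t0:ℂ) := by
    exact_mod_cast ne_of_lt (by linarith : t1 < t0)
  have h02 : (t2:ℂ) ≠ (t0:ℂ) := by
    exact_mod_cast ne_of_lt (by linarith : t2 < t0)
  have h12 : (t2:ℂ) ≠ (t1:ℂ) := by
    exact_mod_cast ne_of_gt (by linarith : t1 < t2)
  have h03 : (t3:ℂ) ≠ (t0:ℂ) := by
    exact_mod_cast ne_of_lt (by linarith : t3 < t0)
  have h13 : (t3:ℂ) ≠ (t1:ℂ) := by
    exact_mod_cast ne_of_gt (by linarith : t1 < t3)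
  have h23 : (t3:ℂ) ≠ (t2:ℂ) := by
    exact_mod_cast ne_of_gt (by linarith : t2 < t3)
  -- the quadratic classification of roots of salemS
  have quad : ∀ z : ℂ, salemS z = 0 →
      z^2 - (t0:ℂ)*z + 1 = 0 ∨ z^2 - (t1:ℂ)*z + 1 = 0 ∨
      z^2 - (t2:ℂ)*z + 1 = 0 ∨ z^2 - (t3:ℂ)*z + 1 = 0 := by
    intro z hz
    have hz0 : z ≠ 0 := by
      intro h; rw [h] at hz; simp [salemS] at hz
    have hid := salem_id z hz0
    rw [hz] at hid
    have hw : (z + z⁻¹)^4 - 2*(z + z⁻¹)^3 - 3*(z + z⁻¹)^2 + 4*(z + z⁻¹) + 1 = 0 := by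
      rcases mul_eq_zero.mp hid.symm with h | h
      · exact absurd h (pow_ne_zero 4 hz0)
      · exact h
    rw [factor (t0:ℂ) t1 t2 t3 h01 h02 h12 h03 h13 h23 hP0c hP1c hP2c hP3c] at hw
    have quadOf : ∀ t : ℂ, z + z⁻¹ - t = 0 → z^2 - t*z + 1 = 0 := by
      intro t h
      have h' : z + z⁻¹ = t := by linear_combination h
      rw [← h']
      field_simp
      ring
    rcases mul_eq_zero.mp hw with h | h
    · rcases mul_eq_zero.mp h with h | h
      · rcases mul_eq_zero.mp h with h | h
        · exact Or.inl (quadOf _ h)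
        · exact Or.inr (Or.inl (quadOf _ h))
      · exact Or.inr (Or.inr (Or.inl (quadOf _ h)))
    · exact Or.inr (Or.inr (Or.inr (quadOf _ h)))
  -- define the two real roots
  have ht0sq : (0:ℝ) ≤ t0^2 - 4 := by nlinarith
  obtain ⟨s, hs0, hs⟩ : ∃ s : ℝ, 0 ≤ s ∧ s^2 = t0^2 - 4 :=
    ⟨Real.sqrt (t0^2 - 4), Real.sqrt_nonneg _, Real.sq_sqrt ht0sq⟩
  obtain ⟨x, hx_def⟩ : ∃ x : ℝ, x = (t0 + s)/2 := ⟨_, rfl⟩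
  obtain ⟨y, hy_def⟩ : ∃ y : ℝ, y = (t0 - s)/2 := ⟨_, rfl⟩
  have hsum : x + y = t0 := by rw [hx_def, hy_def]; ring
  have hprod : x * y = 1 := by
    rw [hx_def, hy_def]; linear_combination (-(1:ℝ)/4) * hs
  have hquadx : x^2 - t0*x + 1 = 0 := by
    rw [hx_def]; linear_combination ((1:ℝ)/4) * hs
  have hquady : y^2 - t0*y + 1 = 0 := by
    rw [hy_def]; linear_combination ((1:ℝ)/4) * hs
  have h2x : 2*x - t0 = s := by rw [hx_def]; ring
  have hxbig : 1.2475 < x := by rw [hx_def]; linarith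
  have hxlb : 1.993 < x := by
    have hfac : (x - 1.993)*(x - (t0 - 1.993)) = 1.993*t0 - 1.993^2 - 1 := by
      linear_combination hquadx
    have hsec : 0 < x - (t0 - 1.993) := by linarith
    nlinarith [hfac, hsec]
  have hxub : x < 1.995 := by
    have hfac : (x - 1.995)*(x - (t0 - 1.995)) = 1.995*t0 - 1.995^2 - 1 := by
      linear_combination hquadx
    have hsec : 0 < x - (t0 - 1.995) := by linarith
    nlinarith [hfac, hsec]
  have hxpos : 0 < x := by linarith
  have hypos : 0 < y := by nlinarith [hprod, hxpos]
  have hylb : 0.501 < y := by nlinarith [hprod, hxub, hxpos, hypos]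
  have hyub : y < 0.502 := by nlinarith [hprod, hxlb, hxpos, hypos]
  -- salemS x = 0 and salemS y = 0
  have root_of_quad : ∀ r : ℝ, r ≠ 0 → r^2 - t0*r + 1 = 0 → salemS (r:ℂ) = 0 := by
    intro r hr hq
    have hr0 : (r:ℂ) ≠ 0 := by exact_mod_cast hr
    have h1 : r * (t0 - r) = 1 := by linear_combination -hq
    have h1c : (r:ℂ) * ((t0:ℂ) - r) = 1 := by exact_mod_cast h1
    have hinv : (r:ℂ)⁻¹ = (t0:ℂ) - r := inv_eq_of_mul_eq_one_right h1c
    have hid := salem_id (r:ℂ) hr0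
    rw [hinv] at hid
    rw [hid]
    linear_combination (r:ℂ)^4 * hP0c
  have hSx : salemS (x:ℂ) = 0 := root_of_quad x (by positivity) hquadx
  have hSy : salemS (y:ℂ) = 0 := root_of_quad y (by positivity) hquady
  refine ⟨x, y, ⟨hxlb, hxub⟩, ⟨hylb, hyub⟩, hSx, hSy, ?_, ?_⟩
  · -- uniqueness of real roots
    intro r hr
    have elim : ∀ t : ℝ, -2 < t → t < 2 → (r:ℂ)^2 - (t:ℂ)*r + 1 = 0 → False := by
      intro t hta htb h
      have hq : r^2 - t*r + 1 = 0 := by exact_mod_cast h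
      rcases lt_trichotomy r 0 with hr0 | hr0 | hr0
      · nlinarith [sq_nonneg (r+1),
          mul_pos (show (0:ℝ) < 2+t by linarith) (show (0:ℝ) < -r by linarith), hq]
      · rw [hr0] at hq; norm_num at hq
      · nlinarith [sq_nonneg (r-1),
          mul_pos (show (0:ℝ) < 2-t by linarith) hr0, hq]
    rcases quad (r:ℂ) hr with h | h | h | h
    · have hq : r^2 - t0*r + 1 = 0 := by exact_mod_cast h
      have hfac : (r - x)*(r - y) = 0 := by linear_combination hq - r*hsum + hprod
      rcases mul_eq_zero.mp hfac with h' | h'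
      · exact Or.inl (sub_eq_zero.mp h')
      · exact Or.inr (sub_eq_zero.mp h')
    · exact absurd h (by intro hh; exact elim t1 (by linarith) (by linarith) hh)
    · exact absurd h (by intro hh; exact elim t2 (by linarith) (by linarith) hh)
    · exact absurd h (by intro hh; exact elim t3 (by linarith) (by linarith) hh)
  · -- non-real roots lie on the unit circle
    intro z hz hnr
    have key : ∀ t : ℝ, z^2 - (t:ℂ)*z + 1 = 0 → ‖z‖ = 1 := by
      intro t h
      have hconj : (starRingEnd ℂ z)^2 - (t:ℂ)*(starRingEnd ℂ z) + 1 = 0 := by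
        have := congrArg (starRingEnd ℂ) h
        simpa [map_sub, map_add, map_mul, map_pow, Complex.conj_ofReal] using this
      have hne : z - starRingEnd ℂ z ≠ 0 := by
        intro hzc
        have hzc' : starRingEnd ℂ z = z := by linear_combination -hzc
        have : z = (z.re : ℂ) := (Complex.conj_eq_iff_re.mp hzc').symm
        exact hnr z.re this
      have hsub : (z - starRingEnd ℂ z) * (z + starRingEnd ℂ z - t) = 0 := by
        linear_combination h - hconj
      have htr : z + starRingEnd ℂ z = (t:ℂ) := by
        have := (mul_eq_zero.mp hsub).resolve_left hne
        linear_combination this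
      have hns : z * starRingEnd ℂ z = 1 := by
        linear_combination -h + z*htr
      have hns' : (Complex.normSq z : ℂ) = 1 := by
        rw [← Complex.mul_conj]; exact hns
      have hns2 : Complex.normSq z = 1 := by exact_mod_cast hns'
      rw [Complex.norm_def, hns2, Real.sqrt_one]
    rcases quad z hz with h | h | h | h
    · exact key t0 h
    · exact key t1 h
    · exact key t2 h
    · exact key t3 h
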